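/- Let δ > 0. For every integer p ≥ 1 and every finite collection of points x_1,...,x_n ∈ ℝ^p, there exist points y_1,...,y_n in a real Hilbert space such that ‖y_i − y_j‖² = ln(1 + ‖x_i − x_j‖²/δ) for all i, j. That is, the logarithmic transformation φ(D) = ln(1 + D/δ) is a Schoenberg transformation. -/

import Mathlib

open Finset Set

/-- `d` is realizable as the matrix of squared distances between `n` points of a
real Hilbert space. -/
def IsHilbertSqDistMatrix {n : ℕ} (d : Fin n → Fin n → ℝ) : Prop :=
  ∃ (H : Type) (inst : NormedAddCommGroup H),
    letI := inst
    ∃ (_ : InnerProductSpace ℝ H) (_ : CompleteSpace H) (y : Fin n → H),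
      ∀ i j, ‖y i - y j‖ ^ 2 = d i j

section Aux

open MeasureTheory
open scoped MatrixOrder

/-- `∫_0^∞ e^{-at} dt = a⁻¹`. -/
lemma aux_integral_exp {a : ℝ} (ha : 0 < a) :
    ∫ t in Ioi (0:ℝ), Real.exp (-(a * t)) = a⁻¹ := by
  have hderiv : ∀ t ∈ Ici (0:ℝ),
      HasDerivAt (fun u : ℝ => -Real.exp (-(a * u)) / a) (Real.exp (-(a * t))) t := by
    intro t _
    have h1 : HasDerivAt (fun u : ℝ => -(a * u)) (-a) t := by
      simpa using (hasDerivAt_id t).const_mul (-a)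
    have h2 := (h1.exp.neg).div_const a
    exact h2.congr_deriv (by field_simp)
  have hint : IntegrableOn (fun t : ℝ => Real.exp (-(a * t))) (Ioi 0) := by
    have h := exp_neg_integrableOn_Ioi 0 ha
    simp only [neg_mul] at h
    exact h
  have htend : Filter.Tendsto (fun u : ℝ => -Real.exp (-(a * u)) / a)
      Filter.atTop (nhds 0) := by
    have hmul : Filter.Tendsto (fun u : ℝ => a * u) Filter.atTop Filter.atTop :=
      Filter.Tendsto.const_mul_atTop ha Filter.tendsto_id
    have h0 : Filter.Tendsto (fun u : ℝ => -(a * u)) Filter.atTop Filter.atBot :=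
      Filter.tendsto_neg_atTop_atBot.comp hmul
    have := (Real.tendsto_exp_atBot.comp h0).neg.div_const a
    simpa using this
  have hval := integral_Ioi_of_hasDerivAt_of_tendsto' hderiv hint htend
  rw [hval, mul_zero, neg_zero, Real.exp_zero]
  ring

/-- The kernel `⟪v i, v j⟫ ^ k` is positive semidefinite. -/
lemma sum_inner_pow_nonneg {n p : ℕ} (v : Fin n → EuclideanSpace ℝ (Fin p))
    (b : Fin n → ℝ) (k : ℕ) :
    0 ≤ ∑ i, ∑ j, b i * b j * (inner ℝ (v i) (v j) : ℝ) ^ k := by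
  have hin : ∀ i j, (inner ℝ (v i) (v j) : ℝ) = ∑ a, v i a * v j a := by
    intro i j
    simp [PiLp.inner_apply, RCLike.inner_apply, conj_trivial]
    exact Finset.sum_congr rfl fun a _ => mul_comm _ _
  have key : ∀ i j : Fin n, b i * b j * (inner ℝ (v i) (v j) : ℝ) ^ k
      = ∑ f : Fin k → Fin p, (b i * ∏ m, v i (f m)) * (b j * ∏ m, v j (f m)) := by
    intro i j
    rw [hin, Fintype.sum_pow, Finset.mul_sum]
    refine Finset.sum_congr rfl fun f _ => ?_
    rw [Finset.prod_mul_distrib]; ring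
  have step : ∑ i, ∑ j, b i * b j * (inner ℝ (v i) (v j) : ℝ) ^ k
      = ∑ f : Fin k → Fin p, (∑ i, b i * ∏ m, v i (f m)) ^ 2 := by
    have h0 : ∑ i, ∑ j, b i * b j * (inner ℝ (v i) (v j) : ℝ) ^ k
        = ∑ i, ∑ j, ∑ f : Fin k → Fin p,
          (b i * ∏ m, v i (f m)) * (b j * ∏ m, v j (f m)) :=
      Finset.sum_congr rfl fun i _ => Finset.sum_congr rfl fun j _ => key i j
    have h1 : ∀ i : Fin n, ∑ j, ∑ f : Fin k → Fin p,
          (b i * ∏ m, v i (f m)) * (b j * ∏ m, v j (f m))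
        = ∑ f : Fin k → Fin p, ∑ j,
          (b i * ∏ m, v i (f m)) * (b j * ∏ m, v j (f m)) :=
      fun i => Finset.sum_comm
    rw [h0, Finset.sum_congr rfl fun i _ => h1 i, Finset.sum_comm]
    refine Finset.sum_congr rfl fun f _ => ?_
    rw [sq, Finset.sum_mul]
    exact Finset.sum_congr rfl fun i _ => by rw [Finset.mul_sum]
  rw [step]
  exact Finset.sum_nonneg fun f _ => sq_nonneg _

/-- The Gaussian kernel is positive semidefinite. -/
lemma gaussian_sum_nonneg {n p : ℕ} (x : Fin n → EuclideanSpace ℝ (Fin p))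
    (c : Fin n → ℝ) {t : ℝ} (ht : 0 ≤ t) :
    0 ≤ ∑ i, ∑ j, c i * c j * Real.exp (-(t * ‖x i - x j‖ ^ 2)) := by
  set b : Fin n → ℝ := fun i => c i * Real.exp (-(t * ‖x i‖ ^ 2)) with hb
  have hexp : ∀ i j, c i * c j * Real.exp (-(t * ‖x i - x j‖ ^ 2))
      = b i * b j * Real.exp (2 * t * (inner ℝ (x i) (x j) : ℝ)) := by
    intro i j
    have hE : -(t * ‖x i - x j‖ ^ 2)
        = -(t * ‖x i‖ ^ 2) + -(t * ‖x j‖ ^ 2) + 2 * t * (inner ℝ (x i) (x j) : ℝ) := by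
      rw [norm_sub_sq_real]; ring
    rw [hE, Real.exp_add, Real.exp_add, hb]; ring
  have hser : ∀ i j, b i * b j * Real.exp (2 * t * (inner ℝ (x i) (x j) : ℝ))
      = ∑' k : ℕ, b i * b j * ((2 * t * (inner ℝ (x i) (x j) : ℝ)) ^ k / (Nat.factorial k : ℝ)) := by
    intro i j
    rw [Real.exp_eq_exp_ℝ, NormedSpace.exp_eq_tsum_div, tsum_mul_left]
  simp_rw [hexp, hser]
  rw [← Fintype.sum_prod_type']
  rw [← Summable.tsum_finsetSum (f := fun (q : Fin n × Fin n) (k : ℕ) =>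
    b q.1 * b q.2 * ((2 * t * (inner ℝ (x q.1) (x q.2) : ℝ)) ^ k / (Nat.factorial k : ℝ)))
    (fun q _ => (Real.summable_pow_div_factorial _).mul_left _)]
  refine tsum_nonneg fun k => ?_
  have hterm : ∀ q : Fin n × Fin n,
      b q.1 * b q.2 * ((2 * t * (inner ℝ (x q.1) (x q.2) : ℝ)) ^ k / (Nat.factorial k : ℝ))
      = ((2 * t) ^ k / (Nat.factorial k : ℝ))
        * (b q.1 * b q.2 * (inner ℝ (x q.1) (x q.2) : ℝ) ^ k) := by
    intro q; rw [mul_pow]; ring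
  simp_rw [hterm, ← Finset.mul_sum]
  refine mul_nonneg (by positivity) ?_
  rw [Fintype.sum_prod_type]
  exact sum_inner_pow_nonneg x b k

/-- The kernel `(u + ‖x i - x j‖²)⁻¹` is positive semidefinite for `u > 0`. -/
lemma inv_sum_nonneg {n p : ℕ} (x : Fin n → EuclideanSpace ℝ (Fin p))
    (c : Fin n → ℝ) {u : ℝ} (hu : 0 < u) :
    0 ≤ ∑ i, ∑ j, c i * c j * (u + ‖x i - x j‖ ^ 2)⁻¹ := by
  have hpos : ∀ i j : Fin n, 0 < u + ‖x i - x j‖ ^ 2 := fun i j => by positivity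
  have hrep : ∀ i j : Fin n, c i * c j * (u + ‖x i - x j‖ ^ 2)⁻¹
      = ∫ t in Ioi (0:ℝ), c i * c j * Real.exp (-((u + ‖x i - x j‖ ^ 2) * t)) := by
    intro i j
    rw [MeasureTheory.integral_const_mul, aux_integral_exp (hpos i j)]
  simp_rw [hrep]
  rw [← Fintype.sum_prod_type']
  have hintq : ∀ q ∈ Finset.univ (α := Fin n × Fin n),
      Integrable (fun t : ℝ => c q.1 * c q.2 * Real.exp (-((u + ‖x q.1 - x q.2‖ ^ 2) * t)))
        (volume.restrict (Ioi 0)) := by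
    intro q _
    have h := (exp_neg_integrableOn_Ioi 0 (hpos q.1 q.2)).const_mul (c q.1 * c q.2)
    simp only [neg_mul] at h
    exact h
  rw [← MeasureTheory.integral_finset_sum _ hintq]
  refine MeasureTheory.setIntegral_nonneg measurableSet_Ioi fun t ht => ?_
  have hsplit : ∀ q : Fin n × Fin n,
      c q.1 * c q.2 * Real.exp (-((u + ‖x q.1 - x q.2‖ ^ 2) * t))
      = Real.exp (-(u * t)) * (c q.1 * c q.2 * Real.exp (-(t * ‖x q.1 - x q.2‖ ^ 2))) := by
    intro q
    have hE : -((u + ‖x q.1 - x q.2‖ ^ 2) * t)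
        = -(u * t) + -(t * ‖x q.1 - x q.2‖ ^ 2) := by ring
    rw [hE, Real.exp_add]; ring
  simp_rw [hsplit, ← Finset.mul_sum]
  refine mul_nonneg (Real.exp_nonneg _) ?_
  rw [Fintype.sum_prod_type]
  exact gaussian_sum_nonneg x c (le_of_lt ht)

/-- The log kernel is of negative type. -/
lemma log_negtype {n p : ℕ} (x : Fin n → EuclideanSpace ℝ (Fin p)) {δ : ℝ} (hδ : 0 < δ)
    (c : Fin n → ℝ) (hc : ∑ i, c i = 0) :
    ∑ i, ∑ j, c i * c j * Real.log (1 + ‖x i - x j‖ ^ 2 / δ) ≤ 0 := by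
  set g : ℝ → ℝ := fun u => ∑ i, ∑ j, c i * c j * Real.log (1 + ‖x i - x j‖ ^ 2 * u⁻¹)
    with hg
  have hderiv : ∀ u : ℝ, 0 < u → HasDerivAt g
      (∑ i, ∑ j, c i * c j * ((u + ‖x i - x j‖ ^ 2)⁻¹ - u⁻¹)) u := by
    intro u hu
    refine HasDerivAt.fun_sum fun i _ => HasDerivAt.fun_sum fun j _ => ?_
    set D := ‖x i - x j‖ ^ 2 with hD
    have hDn : (0:ℝ) ≤ D := sq_nonneg _
    have h1 : HasDerivAt (fun u : ℝ => 1 + D * u⁻¹) (D * -(u ^ 2)⁻¹) u :=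
      ((hasDerivAt_inv hu.ne').const_mul D).const_add 1
    have hne : 1 + D * u⁻¹ ≠ 0 := by positivity
    have h2 := (h1.log hne).const_mul (c i * c j)
    refine h2.congr_deriv ?_
    have huD : u + D ≠ 0 := by positivity
    field_simp
    ring
  have hmono : MonotoneOn g (Ici δ) := by
    refine monotoneOn_of_deriv_nonneg (convex_Ici δ)
      (fun u hu => ((hderiv u (lt_of_lt_of_le hδ hu)).continuousAt).continuousWithinAt)
      (fun u hu => ?_) (fun u hu => ?_)
    · rw [interior_Ici] at hu
      exact ((hderiv u (hδ.trans hu)).differentiableAt).differentiableWithinAt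
    · rw [interior_Ici] at hu
      have hupos : 0 < u := hδ.trans hu
      rw [(hderiv u hupos).deriv]
      have hsplit : ∀ i j : Fin n,
          c i * c j * ((u + ‖x i - x j‖ ^ 2)⁻¹ - u⁻¹)
          = c i * c j * (u + ‖x i - x j‖ ^ 2)⁻¹ - c i * (c j * u⁻¹) := by
        intro i j; ring
      simp_rw [hsplit, Finset.sum_sub_distrib, ← Finset.mul_sum, ← Finset.sum_mul, hc]
      simpa using inv_sum_nonneg x c hupos
  have hlim : Filter.Tendsto g Filter.atTop (nhds 0) := by
    have h : Filter.Tendsto g Filter.atTop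
        (nhds (∑ i : Fin n, ∑ j : Fin n, (0:ℝ))) := by
      refine tendsto_finset_sum _ fun i _ => tendsto_finset_sum _ fun j _ => ?_
      have h1 : Filter.Tendsto (fun u : ℝ => 1 + ‖x i - x j‖ ^ 2 * u⁻¹)
          Filter.atTop (nhds 1) := by
        have h0 := tendsto_inv_atTop_zero.const_mul (‖x i - x j‖ ^ 2)
        simpa using (tendsto_const_nhds (x := (1:ℝ))).add h0
      have h2 := ((Real.continuousAt_log one_ne_zero).tendsto.comp h1).const_mul
        (c i * c j)
      simpa using h2
    simpa using h
  have hgoal : g δ ≤ 0 := by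
    refine ge_of_tendsto hlim ?_
    filter_upwards [Filter.eventually_ge_atTop δ] with u hu
    exact hmono self_mem_Ici hu hu
  have : ∑ i, ∑ j, c i * c j * Real.log (1 + ‖x i - x j‖ ^ 2 / δ) = g δ := by
    simp_rw [hg, div_eq_mul_inv]
  rw [this]
  exact hgoal

/-- A symmetric, zero-diagonal matrix of negative type is a Hilbert squared distance
matrix. -/
lemma isHilbertSqDistMatrix_of_negtype {n : ℕ} (hn : 0 < n) (d : Fin n → Fin n → ℝ)
    (hsymm : ∀ i j, d i j = d j i) (hdiag : ∀ i, d i i = 0)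
    (hneg : ∀ c : Fin n → ℝ, ∑ i, c i = 0 → ∑ i, ∑ j, c i * c j * d i j ≤ 0) :
    IsHilbertSqDistMatrix d := by
  classical
  set i0 : Fin n := ⟨0, hn⟩
  set G : Matrix (Fin n) (Fin n) ℝ := Matrix.of fun i j => (d i i0 + d j i0 - d i j) / 2
    with hGdef
  have hGsym : ∀ i j, G i j = G j i := by
    intro i j; simp only [hGdef, Matrix.of_apply]; rw [hsymm i j]; ring
  have hGpsd : G.PosSemidef := by
    rw [Matrix.posSemidef_iff_dotProduct_mulVec]
    constructor
    · ext i j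
      simp only [Matrix.conjTranspose_apply, star_trivial]
      exact hGsym j i
    · intro c
      have key : (0:ℝ) ≤ ∑ i, ∑ j, c i * c j * G i j := by
        set S := ∑ i, c i with hS
        set A := ∑ i, c i * d i i0 with hA
        set T := ∑ i, ∑ j, c i * c j * d i j with hT
        -- negative type applied to the centered vector
        set c' : Fin n → ℝ := fun i => c i - (if i = i0 then S else 0) with hc'
        have hc'sum : ∑ i, c' i = 0 := by
          simp [hc', Finset.sum_sub_distrib, ← hS]
        have hneg' := hneg c' hc'sum
        have hterm : ∀ i j : Fin n, c' i * c' j * d i j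
            = c i * c j * d i j - c i * ((if j = i0 then S else 0) * d i j)
              - (if i = i0 then S else 0) * (c j * d i j)
              + (if i = i0 then S else 0) * ((if j = i0 then S else 0) * d i j) := by
          intro i j; simp only [hc']; ring
        have e1 : ∑ i, ∑ j, c i * ((if j = i0 then S else 0) * d i j) = S * A := by
          have hrow : ∀ i : Fin n, ∑ j, c i * ((if j = i0 then S else 0) * d i j)
              = c i * (S * d i i0) := by
            intro i
            rw [Finset.sum_eq_single i0]
            · simp
            · intro b _ hb; simp [hb]
            · simp
          simp_rw [hrow]
          rw [hA, Finset.mul_sum]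
          exact Finset.sum_congr rfl fun i _ => by ring
        have e2 : ∑ i, ∑ j, (if i = i0 then S else 0) * (c j * d i j) = S * A := by
          rw [Finset.sum_eq_single i0]
          · rw [hA, Finset.mul_sum]
            refine Finset.sum_congr rfl fun j _ => ?_
            rw [if_pos rfl, hsymm i0 j]
          · intro b _ hb; simp [hb]
          · simp
        have e3 : ∑ i, ∑ j, (if i = i0 then S else 0) * ((if j = i0 then S else 0) * d i j)
            = 0 := by
          rw [Finset.sum_eq_single i0]
          · rw [Finset.sum_eq_single i0]
            · simp [hdiag]
            · intro b _ hb; simp [hb]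
            · simp
          · intro b _ hb; simp [hb]
          · simp
        have hexp : ∑ i, ∑ j, c' i * c' j * d i j = T - 2 * (S * A) := by
          simp_rw [hterm]
          simp only [Finset.sum_add_distrib, Finset.sum_sub_distrib]
          rw [e1, e2, e3, ← hT]
          ring
        rw [hexp] at hneg'
        -- now expand the goal
        have f1 : ∑ i, ∑ j, c i * c j * d i i0 = S * A := by
          have hrow : ∀ i : Fin n, ∑ j, c i * c j * d i i0 = c i * d i i0 * S := by
            intro i
            rw [hS, Finset.mul_sum]
            exact Finset.sum_congr rfl fun j _ => by ring
          simp_rw [hrow]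
          rw [← Finset.sum_mul, ← hA]
          ring
        have f2 : ∑ i, ∑ j, c i * c j * d j i0 = S * A := by
          have hrow : ∀ i : Fin n, ∑ j, c i * c j * d j i0 = c i * A := by
            intro i
            rw [hA, Finset.mul_sum]
            exact Finset.sum_congr rfl fun j _ => by ring
          simp_rw [hrow]
          rw [← Finset.sum_mul, ← hS]
        have hGexp : ∑ i, ∑ j, c i * c j * G i j = (S * A + S * A - T) / 2 := by
          have hterm2 : ∀ i j : Fin n, c i * c j * G i j
              = (c i * c j * d i i0 + c i * c j * d j i0 - c i * c j * d i j) / 2 := by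
            intro i j; simp only [hGdef, Matrix.of_apply]; ring
          simp_rw [hterm2]
          simp only [← Finset.sum_div, Finset.sum_add_distrib, Finset.sum_sub_distrib]
          rw [f1, f2, ← hT]
        rw [hGexp]
        linarith
      refine le_of_le_of_eq key ?_
      simp only [Matrix.mulVec, dotProduct, Pi.star_apply,
        star_trivial, Finset.mul_sum]
      exact Finset.sum_congr rfl fun i _ => Finset.sum_congr rfl fun j _ => by ring
  -- construct points from the matrix square root
  set Sq := CFC.sqrt G with hSq
  set y : Fin n → EuclideanSpace ℝ (Fin n) := fun i => (WithLp.equiv 2 _).symm (Sq i)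
    with hy
  have hinner : ∀ i j, (inner ℝ (y i) (y j) : ℝ) = G i j := by
    intro i j
    have h0 : (inner ℝ (y i) (y j) : ℝ) = ∑ k, Sq i k * Sq j k := by
      rw [PiLp.inner_apply]
      exact Finset.sum_congr rfl fun k _ => by simp [hy, mul_comm]
    rw [h0]
    have hsqrtH : ∀ a b : Fin n, Sq a b = Sq b a := by
      intro a b
      have h := (Matrix.nonneg_iff_posSemidef.mp (CFC.sqrt_nonneg G)).isHermitian.apply b a
      simpa [hSq] using h
    calc ∑ k, Sq i k * Sq j k = ∑ k, Sq i k * Sq k j :=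
          Finset.sum_congr rfl fun k _ => by rw [hsqrtH j k]
      _ = (Sq * Sq) i j := (Matrix.mul_apply).symm
      _ = G i j := by rw [hSq, CFC.sqrt_mul_sqrt_self G hGpsd.nonneg]
  refine ⟨EuclideanSpace ℝ (Fin n), inferInstance, inferInstance, inferInstance, y, ?_⟩
  intro i j
  have h1 : ‖y i - y j‖ ^ 2 = G i i - 2 * G i j + G j j := by
    rw [norm_sub_sq_real, hinner i j, ← real_inner_self_eq_norm_sq,
      ← real_inner_self_eq_norm_sq, hinner i i, hinner j j]
  rw [h1]
  simp only [hGdef, Matrix.of_apply, hdiag]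
  ring

end Aux

/-- The logarithmic transformation `φ(D) = ln (1 + D/δ)`, `δ > 0`, is a Schoenberg
transformation: for every configuration of points in `ℝ^p` there are points of a real
Hilbert space with `‖y i - y j‖² = ln (1 + ‖x i - x j‖²/δ)`. -/
theorem logarithmic_is_schoenberg (δ : ℝ) (hδ : 0 < δ)
    (p n : ℕ) (hp : 1 ≤ p) (x : Fin n → EuclideanSpace ℝ (Fin p)) :
    IsHilbertSqDistMatrix (fun i j => Real.log (1 + ‖x i - x j‖ ^ 2 / δ)) := by
  rcases Nat.eq_zero_or_pos n with hn | hn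
  · subst hn
    exact ⟨ℝ, inferInstance, inferInstance, inferInstance, fun _ => 0,
      fun i => i.elim0⟩
  · refine isHilbertSqDistMatrix_of_negtype hn _ (fun i j => ?_) (fun i => ?_)
      (fun c hc => log_negtype x hδ c hc)
    · show Real.log (1 + ‖x i - x j‖ ^ 2 / δ) = Real.log (1 + ‖x j - x i‖ ^ 2 / δ)
      rw [norm_sub_rev]
    · show Real.log (1 + ‖x i - x i‖ ^ 2 / δ) = 0
      simp
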